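/- Let k ≥ 0 be an integer and let L = (a, b) ∈ ℤ × (Fin 8 → ℤ). Then ⟨L, ξ⟩ ≥ k for every exceptional class ξ ∈ E_8 if and only if all of the following hold: b_i ≥ k for all i; a ≥ b_i + b_j + k for all distinct i ≠ j; 2a ≥ ∑_{i∈T} b_i + k for every 5-element subset T; 3a ≥ 2b_i + ∑_{j∈T} b_j + k for every index i and every 6-element subset T of Fin 8 \ {i}; 4a ≥ 2∑_{i∈A} b_i + ∑_{j∈B} b_j + k for every partition of Fin 8 into a 3-element subset A and the complementary 5-element subset B; 5a ≥ 2∑_{i∈C} b_i + b_j + b_{j'} + k for every 6-element subset C with complementary indices j, j'; and 6a ≥ 3b_i + 2∑_{j ≠ i} b_j + k for every index i. -/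
import Mathlib

/-- The intersection pairing on `Λ₈ = ℤ × (Fin 8 → ℤ)`:
`⟨(a,b),(d,m)⟩ = a·d - ∑ bᵢ·mᵢ`. -/
def pairing8 (L ξ : ℤ × (Fin 8 → ℤ)) : ℤ :=
  L.1 * ξ.1 - ∑ i, L.2 i * ξ.2 i

/-- A class `(d, m)` in `Λ₈` is exceptional if `d² - ∑ mᵢ² = -1` and
`3d - ∑ mᵢ = 1`. -/
def IsExc8 (p : ℤ × (Fin 8 → ℤ)) : Prop :=
  p.1 ^ 2 - ∑ i, (p.2 i) ^ 2 = -1 ∧ 3 * p.1 - ∑ i, p.2 i = 1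

open Finset

lemma consec_nonneg (n : ℤ) : 0 ≤ n * (n+1) := by
  rcases le_or_gt 0 n with h|h
  · exact mul_nonneg h (by omega)
  · have := mul_nonneg (a := -n) (b := -(n+1)) (by omega) (by omega)
    nlinarith

lemma consec2 (n p : ℤ) : 0 ≤ (n - p) * (n - (p+1)) := by
  have := consec_nonneg (n - (p+1)); nlinarith

lemma quad_expand (m : Fin 8 → ℤ) (p q : ℤ) :
    ∑ i, (m i - p) * (m i - q) = (∑ i, (m i)^2) - (p+q) * (∑ i, m i) + 8*(p*q) := by
  have : ∀ i : Fin 8, (m i - p) * (m i - q) = (m i)^2 - (p+q) * m i + p*q := fun i => by ring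
  simp only [this, Finset.sum_add_distrib, Finset.sum_sub_distrib, ← Finset.mul_sum, Finset.sum_const]
  simp; ring

lemma big_expand (m : Fin 8 → ℤ) (c : ℤ) :
    ∑ i, (8 * m i - c)^2 = 64 * (∑ i, (m i)^2) - 16 * c * (∑ i, m i) + 8 * c^2 := by
  have : ∀ i : Fin 8, (8 * m i - c)^2 = 64 * (m i)^2 - 16 * c * m i + c^2 := fun i => by ring
  simp only [this, Finset.sum_add_distrib, Finset.sum_sub_distrib, ← Finset.mul_sum, Finset.sum_const]
  simp
  try ring

lemma card_split (T : Finset (Fin 8)) : (T.card : ℤ) + (Tᶜ.card : ℤ) = 8 := by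
  have := Finset.card_add_card_compl T
  rw [Fintype.card_fin] at this
  omega

lemma sum_ite_split (T : Finset (Fin 8)) (f g : Fin 8 → ℤ) :
    ∑ i, (if i ∈ T then f i else g i) = (∑ i ∈ T, f i) + ∑ i ∈ Tᶜ, g i := by
  have h1 : Finset.univ.filter (fun i : Fin 8 => i ∈ T) = T := by ext i; simp
  have h2 : Finset.univ.filter (fun i : Fin 8 => ¬ i ∈ T) = Tᶜ := by ext i; simp
  rw [Finset.sum_ite, h1, h2]

lemma sum_const_card (T : Finset (Fin 8)) (c : ℤ) : ∑ _i ∈ T, c = c * T.card := by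
  rw [Finset.sum_const]; push_cast; ring

/-- two-valued decomposition -/
lemma two_valued (m : Fin 8 → ℤ) (u v : ℤ) (h : ∀ i, m i = u ∨ m i = v) (huv : u ≠ v)
    (b : Fin 8 → ℤ) :
    (∑ i, m i = u * ((Finset.univ.filter (fun i => m i = v))ᶜ.card : ℤ)
        + v * ((Finset.univ.filter (fun i => m i = v)).card : ℤ))
    ∧ (∑ i, b i * m i = u * (∑ i ∈ (Finset.univ.filter (fun i => m i = v))ᶜ, b i)
        + v * (∑ i ∈ Finset.univ.filter (fun i => m i = v), b i)) := by
  set T := Finset.univ.filter (fun i => m i = v) with hT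
  have hmem : ∀ i, i ∈ T ↔ m i = v := by intro i; simp [hT]
  have hv : ∀ i ∈ T, m i = v := fun i hi => (hmem i).mp hi
  have hu : ∀ i ∈ Tᶜ, m i = u := by
    intro i hi
    rcases h i with h'|h'
    · exact h'
    · exact absurd ((hmem i).mpr h') (Finset.mem_compl.mp hi)
  constructor
  · rw [← Finset.sum_add_sum_compl T m,
      Finset.sum_congr rfl hv, Finset.sum_congr rfl hu, sum_const_card, sum_const_card]
    ring
  · have e1 : ∑ i ∈ T, b i * m i = v * ∑ i ∈ T, b i := by
      rw [Finset.mul_sum]; exact Finset.sum_congr rfl (fun i hi => by rw [hv i hi]; ring)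
    have e2 : ∑ i ∈ Tᶜ, b i * m i = u * ∑ i ∈ Tᶜ, b i := by
      rw [Finset.mul_sum]; exact Finset.sum_congr rfl (fun i hi => by rw [hu i hi]; ring)
    rw [← Finset.sum_add_sum_compl T (fun i => b i * m i), e1, e2]
    ring

section Fwd
variable (k a : ℤ) (b : Fin 8 → ℤ)
  (H : ∀ ξ : ℤ × (Fin 8 → ℤ), IsExc8 ξ → k ≤ pairing8 (a, b) ξ)

-- generic two-valued class
lemma exc_of_two (T : Finset (Fin 8)) (d u v : ℤ)
    (h1 : d^2 - (v^2 * T.card + u^2 * Tᶜ.card) = -1)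
    (h2 : 3*d - (v * T.card + u * Tᶜ.card) = 1) :
    IsExc8 (d, fun i => if i ∈ T then v else u) := by
  constructor
  · show d^2 - ∑ i, (if i ∈ T then v else u)^2 = -1
    have : ∀ i : Fin 8, (if i ∈ T then v else u)^2 = if i ∈ T then v^2 else u^2 :=
      fun i => by split <;> rfl
    rw [Finset.sum_congr rfl (fun i _ => this i), sum_ite_split, sum_const_card, sum_const_card]
    exact h1
  · show 3*d - ∑ i, (if i ∈ T then v else u) = 1
    rw [sum_ite_split, sum_const_card, sum_const_card]
    exact h2

lemma pair_of_two (T : Finset (Fin 8)) (d u v : ℤ) :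
    pairing8 (a, b) (d, fun i => if i ∈ T then v else u)
      = a * d - (v * ∑ i ∈ T, b i + u * ∑ i ∈ Tᶜ, b i) := by
  show a * d - ∑ i, b i * (if i ∈ T then v else u) = _
  have : ∀ i : Fin 8, b i * (if i ∈ T then v else u) = if i ∈ T then b i * v else b i * u :=
    fun i => by split <;> rfl
  rw [Finset.sum_congr rfl (fun i _ => this i), sum_ite_split, ← Finset.sum_mul, ← Finset.sum_mul]
  ring

include H in
lemma fwd1 : ∀ i, k ≤ b i := by
  intro i
  have hc : (({i} : Finset (Fin 8)).card : ℤ) = 1 := by simp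
  have hcc : ((({i} : Finset (Fin 8))ᶜ).card : ℤ) = 7 := by
    have := card_split ({i} : Finset (Fin 8)); omega
  have := H (0, fun j => if j ∈ ({i} : Finset (Fin 8)) then -1 else 0)
    (exc_of_two _ 0 0 (-1) (by rw [hc, hcc]; ring) (by rw [hc, hcc]; ring))
  rw [pair_of_two] at this
  simp at this
  linarith

include H in
lemma fwd2 : ∀ i j, i ≠ j → b i + b j + k ≤ a := by
  intro i j hij
  have hc : (({i, j} : Finset (Fin 8)).card : ℤ) = 2 := by
    rw [Finset.card_pair hij]; rfl
  have hcc : ((({i, j} : Finset (Fin 8))ᶜ).card : ℤ) = 6 := by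
    have := card_split ({i, j} : Finset (Fin 8)); omega
  have := H (1, fun l => if l ∈ ({i, j} : Finset (Fin 8)) then 1 else 0)
    (exc_of_two _ 1 0 1 (by rw [hc, hcc]; ring) (by rw [hc, hcc]; ring))
  rw [pair_of_two, Finset.sum_pair hij] at this
  simp at this
  linarith

include H in
lemma fwd3 : ∀ T : Finset (Fin 8), T.card = 5 → (∑ i ∈ T, b i) + k ≤ 2 * a := by
  intro T hT
  have hcc : ((Tᶜ).card : ℤ) = 3 := by have := card_split T; omega
  have := H (2, fun l => if l ∈ T then 1 else 0)
    (exc_of_two _ 2 0 1 (by rw [hT, hcc]; try push_cast; try ring; try norm_num) (by rw [hT, hcc]; try push_cast; try ring; try norm_num))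
  rw [pair_of_two] at this
  simp at this
  linarith

include H in
lemma fwd5 : ∀ A : Finset (Fin 8), A.card = 3 →
    2 * (∑ i ∈ A, b i) + (∑ j ∈ Aᶜ, b j) + k ≤ 4 * a := by
  intro A hA
  have hcc : ((Aᶜ).card : ℤ) = 5 := by have := card_split A; omega
  have := H (4, fun l => if l ∈ A then 2 else 1)
    (exc_of_two _ 4 1 2 (by rw [hA, hcc]; try push_cast; try ring; try norm_num) (by rw [hA, hcc]; try push_cast; try ring; try norm_num))
  rw [pair_of_two] at this
  linarith

include H in
lemma fwd6 : ∀ C : Finset (Fin 8), C.card = 6 →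
    2 * (∑ i ∈ C, b i) + (∑ j ∈ Cᶜ, b j) + k ≤ 5 * a := by
  intro C hC
  have hcc : ((Cᶜ).card : ℤ) = 2 := by have := card_split C; omega
  have := H (5, fun l => if l ∈ C then 2 else 1)
    (exc_of_two _ 5 1 2 (by rw [hC, hcc]; try push_cast; try ring; try norm_num) (by rw [hC, hcc]; try push_cast; try ring; try norm_num))
  rw [pair_of_two] at this
  linarith

include H in
lemma fwd7 : ∀ i : Fin 8,
    3 * b i + 2 * (∑ j ∈ Finset.univ \ {i}, b j) + k ≤ 6 * a := by
  intro i
  have hc : (({i} : Finset (Fin 8)).card : ℤ) = 1 := by simp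
  have hcc : ((({i} : Finset (Fin 8))ᶜ).card : ℤ) = 7 := by
    have := card_split ({i} : Finset (Fin 8)); omega
  have := H (6, fun l => if l ∈ ({i} : Finset (Fin 8)) then 3 else 2)
    (exc_of_two _ 6 2 3 (by rw [hc, hcc]; ring) (by rw [hc, hcc]; ring))
  rw [pair_of_two] at this
  rw [Finset.compl_eq_univ_sdiff] at this
  simp at this
  have hs : ∑ j ∈ Finset.univ \ {i}, b j = (∑ j, b j) - b i := by
    rw [Finset.sum_sdiff_eq_sub (Finset.subset_univ _), Finset.sum_singleton]
  rw [hs]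
  linarith

include H in
lemma fwd4 : ∀ i : Fin 8, ∀ T : Finset (Fin 8), T.card = 6 → i ∉ T →
    2 * b i + (∑ j ∈ T, b j) + k ≤ 3 * a := by
  intro i T hT hiT
  set m : Fin 8 → ℤ := fun j => if j ∈ T then 1 else if j = i then 2 else 0 with hm
  have hcc : ((Tᶜ).card : ℤ) = 2 := by have := card_split T; omega
  have hiTc : i ∈ Tᶜ := Finset.mem_compl.mpr hiT
  have hsum : ∑ j, m j = 8 := by
    rw [hm, sum_ite_split, sum_const_card, Finset.sum_ite_eq' Tᶜ i (fun _ => 2)]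
    rw [if_pos hiTc, hT]; try push_cast; try ring
  have hsq : ∑ j, (m j)^2 = 10 := by
    have : ∀ j : Fin 8, (m j)^2 = if j ∈ T then 1 else if j = i then 4 else 0 := by
      intro j; rw [hm]; dsimp only; split_ifs <;> norm_num
    rw [Finset.sum_congr rfl (fun j _ => this j), sum_ite_split, sum_const_card,
      Finset.sum_ite_eq' Tᶜ i (fun _ => 4), if_pos hiTc, hT]
    try push_cast
    try ring
  have hp : ∑ j, b j * m j = (∑ j ∈ T, b j) + 2 * b i := by
    have : ∀ j : Fin 8, b j * m j = if j ∈ T then b j else if j = i then 2 * b j else 0 := by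
      intro j; rw [hm]; dsimp only; split_ifs <;> ring
    rw [Finset.sum_congr rfl (fun j _ => this j), sum_ite_split,
      Finset.sum_ite_eq' Tᶜ i (fun j => 2 * b j), if_pos hiTc]
  have := H (3, m) ⟨by show (3:ℤ)^2 - _ = -1; rw [hsq]; ring,
                    by show 3*(3:ℤ) - _ = 1; rw [hsum]; norm_num⟩
  have hpair : pairing8 (a, b) (3, m) = 3*a - ((∑ j ∈ T, b j) + 2 * b i) := by
    show a * 3 - ∑ j, b j * m j = _
    rw [hp]; ring
  rw [hpair] at this
  linarith

end Fwd

lemma sum_indicator (T : Finset (Fin 8)) (f : Fin 8 → ℤ) :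
    ∑ i, (if i ∈ T then f i else 0) = ∑ i ∈ T, f i := by
  rw [sum_ite_split]; simp

section Bwd
variable (k a : ℤ) (b : Fin 8 → ℤ)

lemma bwd
    (h1 : ∀ i, k ≤ b i)
    (h2 : ∀ i j, i ≠ j → b i + b j + k ≤ a)
    (h3 : ∀ T : Finset (Fin 8), T.card = 5 → (∑ i ∈ T, b i) + k ≤ 2 * a)
    (h4 : ∀ i : Fin 8, ∀ T : Finset (Fin 8), T.card = 6 → i ∉ T →
       2 * b i + (∑ j ∈ T, b j) + k ≤ 3 * a)
    (h5 : ∀ A : Finset (Fin 8), A.card = 3 →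
       2 * (∑ i ∈ A, b i) + (∑ j ∈ Aᶜ, b j) + k ≤ 4 * a)
    (h6 : ∀ C : Finset (Fin 8), C.card = 6 →
       2 * (∑ i ∈ C, b i) + (∑ j ∈ Cᶜ, b j) + k ≤ 5 * a)
    (h7 : ∀ i : Fin 8,
       3 * b i + 2 * (∑ j ∈ Finset.univ \ {i}, b j) + k ≤ 6 * a) :
    ∀ ξ : ℤ × (Fin 8 → ℤ), IsExc8 ξ → k ≤ pairing8 (a, b) ξ := by
  rintro ⟨d, m⟩ ⟨e1, e2⟩
  simp only [IsExc8] at e1 e2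
  have hS2 : ∑ i, (m i)^2 = d^2 + 1 := by linarith
  have hS1 : ∑ i, m i = 3*d - 1 := by linarith
  show k ≤ a * d - ∑ i, b i * m i
  have hb := Finset.sum_nonneg (fun i (_ : i ∈ Finset.univ) => sq_nonneg (8 * m i - (3*d-1)))
  rw [big_expand, hS1, hS2] at hb
  have hd1 : -1 ≤ d := by nlinarith [sq_nonneg (d+2)]
  have hd2 : d ≤ 7 := by nlinarith [sq_nonneg (d-8)]
  interval_cases d
  -- d = -1 : impossible
  · have hnn : (0:ℤ) ≤ ∑ i, (m i - (-1)) * (m i - 0) :=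
      Finset.sum_nonneg (fun i _ => by simpa using consec2 (m i) (-1))
    rw [quad_expand, hS1, hS2] at hnn
    norm_num at hnn
  -- d = 0
  · have hzero : ∀ i ∈ Finset.univ, (m i - (-1)) * (m i - 0) = 0 :=
      (Finset.sum_eq_zero_iff_of_nonneg
        (fun i _ => by simpa using consec2 (m i) (-1))).mp
        (by rw [quad_expand, hS1, hS2]; norm_num)
    have hval : ∀ i, m i = 0 ∨ m i = -1 := fun i => by
      have := hzero i (Finset.mem_univ i)
      rcases mul_eq_zero.mp this with h|h
      · right; omega
      · left; omega
    obtain ⟨hA1, hA2⟩ := two_valued m 0 (-1) hval (by norm_num) b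
    set T := Finset.univ.filter (fun i => m i = -1) with hTdef
    have hcards := card_split T
    rw [hS1] at hA1
    have hTcard : T.card = 1 := by omega
    obtain ⟨i0, hT⟩ := Finset.card_eq_one.mp hTcard
    rw [hA2, hT, Finset.sum_singleton]
    have := h1 i0
    linarith
  -- d = 1
  · have hzero : ∀ i ∈ Finset.univ, (m i - 0) * (m i - 1) = 0 :=
      (Finset.sum_eq_zero_iff_of_nonneg
        (fun i _ => by simpa using consec2 (m i) 0)).mp
        (by rw [quad_expand, hS1, hS2]; norm_num)
    have hval : ∀ i, m i = 0 ∨ m i = 1 := fun i => by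
      have := hzero i (Finset.mem_univ i)
      rcases mul_eq_zero.mp this with h|h
      · left; omega
      · right; omega
    obtain ⟨hA1, hA2⟩ := two_valued m 0 1 hval (by norm_num) b
    set T := Finset.univ.filter (fun i => m i = 1) with hTdef
    have hcards := card_split T
    rw [hS1] at hA1
    have hTcard : T.card = 2 := by omega
    obtain ⟨i0, j0, hij, hT⟩ := Finset.card_eq_two.mp hTcard
    rw [hA2, hT, Finset.sum_pair hij]
    have := h2 i0 j0 hij
    linarith
  -- d = 2
  · have hzero : ∀ i ∈ Finset.univ, (m i - 0) * (m i - 1) = 0 :=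
      (Finset.sum_eq_zero_iff_of_nonneg
        (fun i _ => by simpa using consec2 (m i) 0)).mp
        (by rw [quad_expand, hS1, hS2]; norm_num)
    have hval : ∀ i, m i = 0 ∨ m i = 1 := fun i => by
      have := hzero i (Finset.mem_univ i)
      rcases mul_eq_zero.mp this with h|h
      · left; omega
      · right; omega
    obtain ⟨hA1, hA2⟩ := two_valued m 0 1 hval (by norm_num) b
    set T := Finset.univ.filter (fun i => m i = 1) with hTdef
    have hcards := card_split T
    rw [hS1] at hA1
    have hTcard : T.card = 5 := by omega
    have := h3 T hTcard
    rw [hA2]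
    linarith
  -- d = 3
  · have hsq' : ∑ i, (m i - 1) * (m i - 1) = 2 := by
      rw [quad_expand, hS1, hS2]; norm_num
    have hval : ∀ i, m i = 0 ∨ m i = 1 ∨ m i = 2 := by
      intro i
      have hle : (m i - 1) * (m i - 1) ≤ 2 := by
        calc (m i - 1) * (m i - 1) ≤ ∑ j, (m j - 1) * (m j - 1) :=
              Finset.single_le_sum (f := fun j => (m j - 1) * (m j - 1))
                (fun j _ => mul_self_nonneg _) (Finset.mem_univ i)
          _ = 2 := hsq'
      have hb1 : m i ≤ 2 := by nlinarith [mul_self_nonneg (m i - 3)]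
      have hb2 : 0 ≤ m i := by nlinarith [mul_self_nonneg (m i + 1)]
      omega
    set T2 := Finset.univ.filter (fun i => m i = 2) with hT2def
    set T1 := Finset.univ.filter (fun i => m i = 1) with hT1def
    have hmem2 : ∀ i, i ∈ T2 ↔ m i = 2 := fun i => by simp [hT2def]
    have hmem1 : ∀ i, i ∈ T1 ↔ m i = 1 := fun i => by simp [hT1def]
    have hdecomp : ∀ i, m i = (if i ∈ T2 then 2 else 0) + (if i ∈ T1 then 1 else 0) := by
      intro i
      rcases hval i with h|h|h <;>
        simp [hmem2, hmem1, h]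
    have hdecompsq : ∀ i, (m i)^2 = (if i ∈ T2 then 4 else 0) + (if i ∈ T1 then 1 else 0) := by
      intro i
      rcases hval i with h|h|h <;>
        simp [hmem2, hmem1, h] <;> norm_num
    have hdecompb : ∀ i, b i * m i = (if i ∈ T2 then 2 * b i else 0) + (if i ∈ T1 then b i else 0) := by
      intro i
      rcases hval i with h|h|h <;>
        simp [hmem2, hmem1, h] <;> ring
    have hs1 : (3:ℤ)*3 - 1 = 2 * T2.card + T1.card := by
      rw [← hS1, Finset.sum_congr rfl (fun i _ => hdecomp i), Finset.sum_add_distrib,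
        sum_indicator, sum_indicator, sum_const_card, sum_const_card]
      ring
    have hs2 : (3:ℤ)^2 + 1 = 4 * T2.card + T1.card := by
      rw [← hS2, Finset.sum_congr rfl (fun i _ => hdecompsq i), Finset.sum_add_distrib,
        sum_indicator, sum_indicator, sum_const_card, sum_const_card]
      ring
    have hT2card : T2.card = 1 := by omega
    have hT1card : T1.card = 6 := by omega
    obtain ⟨i0, hT2⟩ := Finset.card_eq_one.mp hT2card
    have hi0 : i0 ∉ T1 := by
      have : m i0 = 2 := (hmem2 i0).mp (by rw [hT2]; exact Finset.mem_singleton_self i0)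
      rw [hmem1]; omega
    have hbm : ∑ i, b i * m i = 2 * b i0 + ∑ i ∈ T1, b i := by
      rw [Finset.sum_congr rfl (fun i _ => hdecompb i), Finset.sum_add_distrib,
        sum_indicator, sum_indicator, hT2, Finset.sum_singleton]
    have := h4 i0 T1 hT1card hi0
    rw [hbm]
    linarith
  -- d = 4
  · have hzero : ∀ i ∈ Finset.univ, (m i - 1) * (m i - 2) = 0 :=
      (Finset.sum_eq_zero_iff_of_nonneg
        (fun i _ => by simpa using consec2 (m i) 1)).mp
        (by rw [quad_expand, hS1, hS2]; norm_num)
    have hval : ∀ i, m i = 1 ∨ m i = 2 := fun i => by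
      have := hzero i (Finset.mem_univ i)
      rcases mul_eq_zero.mp this with h|h
      · left; omega
      · right; omega
    obtain ⟨hA1, hA2⟩ := two_valued m 1 2 hval (by norm_num) b
    set T := Finset.univ.filter (fun i => m i = 2) with hTdef
    have hcards := card_split T
    rw [hS1] at hA1
    have hTcard : T.card = 3 := by omega
    have := h5 T hTcard
    rw [hA2]
    linarith
  -- d = 5
  · have hzero : ∀ i ∈ Finset.univ, (m i - 1) * (m i - 2) = 0 :=
      (Finset.sum_eq_zero_iff_of_nonneg
        (fun i _ => by simpa using consec2 (m i) 1)).mp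
        (by rw [quad_expand, hS1, hS2]; norm_num)
    have hval : ∀ i, m i = 1 ∨ m i = 2 := fun i => by
      have := hzero i (Finset.mem_univ i)
      rcases mul_eq_zero.mp this with h|h
      · left; omega
      · right; omega
    obtain ⟨hA1, hA2⟩ := two_valued m 1 2 hval (by norm_num) b
    set T := Finset.univ.filter (fun i => m i = 2) with hTdef
    have hcards := card_split T
    rw [hS1] at hA1
    have hTcard : T.card = 6 := by omega
    have := h6 T hTcard
    rw [hA2]
    linarith
  -- d = 6
  · have hzero : ∀ i ∈ Finset.univ, (m i - 2) * (m i - 3) = 0 :=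
      (Finset.sum_eq_zero_iff_of_nonneg
        (fun i _ => by simpa using consec2 (m i) 2)).mp
        (by rw [quad_expand, hS1, hS2]; norm_num)
    have hval : ∀ i, m i = 2 ∨ m i = 3 := fun i => by
      have := hzero i (Finset.mem_univ i)
      rcases mul_eq_zero.mp this with h|h
      · left; omega
      · right; omega
    obtain ⟨hA1, hA2⟩ := two_valued m 2 3 hval (by norm_num) b
    set T := Finset.univ.filter (fun i => m i = 3) with hTdef
    have hcards := card_split T
    rw [hS1] at hA1
    have hTcard : T.card = 1 := by omega
    obtain ⟨i0, hT⟩ := Finset.card_eq_one.mp hTcard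
    have := h7 i0
    rw [hA2, hT, Finset.sum_singleton, Finset.compl_eq_univ_sdiff] at *
    linarith
  -- d = 7 : impossible
  · have hnn : (0:ℤ) ≤ ∑ i, (m i - 2) * (m i - 3) :=
      Finset.sum_nonneg (fun i _ => by simpa using consec2 (m i) 2)
    rw [quad_expand, hS1, hS2] at hnn
    norm_num at hnn

end Bwd


/-- for `k ≥ 0`, a class `L = (a, b)` on `S₈` satisfies
`⟨L, ξ⟩ ≥ k` for every exceptional class `ξ ∈ E₈` iff all of the listed
numerical conditions hold. -/
theorem k_very_ample_criterion_r8 (k : ℤ) (hk : 0 ≤ k)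
    (a : ℤ) (b : Fin 8 → ℤ) :
    (∀ ξ : ℤ × (Fin 8 → ℤ), IsExc8 ξ → k ≤ pairing8 (a, b) ξ) ↔
      ((∀ i, k ≤ b i) ∧
       (∀ i j, i ≠ j → b i + b j + k ≤ a) ∧
       (∀ T : Finset (Fin 8), T.card = 5 → (∑ i ∈ T, b i) + k ≤ 2 * a) ∧
       (∀ i : Fin 8, ∀ T : Finset (Fin 8), T.card = 6 → i ∉ T →
         2 * b i + (∑ j ∈ T, b j) + k ≤ 3 * a) ∧
       (∀ A : Finset (Fin 8), A.card = 3 →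
         2 * (∑ i ∈ A, b i) + (∑ j ∈ Aᶜ, b j) + k ≤ 4 * a) ∧
       (∀ C : Finset (Fin 8), C.card = 6 →
         2 * (∑ i ∈ C, b i) + (∑ j ∈ Cᶜ, b j) + k ≤ 5 * a) ∧
       (∀ i : Fin 8,
         3 * b i + 2 * (∑ j ∈ Finset.univ \ {i}, b j) + k ≤ 6 * a)) := by
  constructor
  · intro H
    exact ⟨fwd1 k a b H, fwd2 k a b H, fwd3 k a b H, fwd4 k a b H,
      fwd5 k a b H, fwd6 k a b H, fwd7 k a b H⟩
  · rintro ⟨h1, h2, h3, h4, h5, h6, h7⟩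
    exact bwd k a b h1 h2 h3 h4 h5 h6 h7
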